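/- Let I be a real symmetric positive semidefinite n×n matrix, Σ a real symmetric positive definite k×k matrix, and G a real k×n matrix with I ⪰ Gᵀ Σ⁻¹ G. Let V₁ be a real n×r matrix with orthonormal columns (V₁ᵀ V₁ = 1) whose column space equals the column space of I. Then V₁ᵀ I V₁ is positive definite, and G V₁ (V₁ᵀ I V₁)⁻¹ V₁ᵀ Gᵀ ⪯ Σ, i.e., Σ − G V₁ (V₁ᵀ I V₁)⁻¹ V₁ᵀ Gᵀ is positive semidefinite. -/

import Mathlib

open Matrix

/-- Let `I` be a real symmetric positive semidefinite `n×n` matrix, `Σ` a real symmetric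
positive definite `k×k` matrix, and `G` a real `k×n` matrix with `I ⪰ Gᵀ Σ⁻¹ G`.
Let `V₁` be a real `n×r` matrix with orthonormal columns whose column space equals the
column space of `I`. Then `V₁ᵀ I V₁` is positive definite and
`G V₁ (V₁ᵀ I V₁)⁻¹ V₁ᵀ Gᵀ ⪯ Σ`. -/
theorem restricted_propagated_cov_le_target {n k r : ℕ}
    (I : Matrix (Fin n) (Fin n) ℝ) (hI : I.PosSemidef)
    (S : Matrix (Fin k) (Fin k) ℝ) (hS : S.PosDef)
    (G : Matrix (Fin k) (Fin n) ℝ)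
    (hIJ : (I - Gᵀ * S⁻¹ * G).PosSemidef)
    (V₁ : Matrix (Fin n) (Fin r) ℝ) (hV : V₁ᵀ * V₁ = 1)
    (hrange : LinearMap.range V₁.mulVecLin = LinearMap.range I.mulVecLin) :
    (V₁ᵀ * I * V₁).PosDef ∧
      (S - G * V₁ * (V₁ᵀ * I * V₁)⁻¹ * V₁ᵀ * Gᵀ).PosSemidef := by
  have hVt : (V₁)ᴴ = V₁ᵀ := by
    ext i j; simp [conjTranspose_apply]
  -- A := V₁ᵀ I V₁ is PSD
  have hApsd : (V₁ᵀ * I * V₁).PosSemidef := by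
    have := hI.conjTranspose_mul_mul_same V₁
    rwa [hVt] at this
  -- A is PosDef
  have hApos : (V₁ᵀ * I * V₁).PosDef := by
    refine PosDef.of_dotProduct_mulVec_pos hApsd.1 fun x hx => ?_
    rcases lt_or_eq_of_le (hApsd.dotProduct_mulVec_nonneg x) with h | h
    · exact h
    exfalso
    -- x ⬝ A x = 0, show x = 0
    have hq : star (V₁ *ᵥ x) ⬝ᵥ I *ᵥ (V₁ *ᵥ x) = 0 := by
      have : star x ⬝ᵥ (V₁ᵀ * I * V₁) *ᵥ x = star (V₁ *ᵥ x) ⬝ᵥ I *ᵥ (V₁ *ᵥ x) := by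
        simp only [star_trivial, ← Matrix.mulVec_mulVec, dotProduct_mulVec,
          vecMul_transpose]
      rw [← this, ← h]
    have hIv : I *ᵥ (V₁ *ᵥ x) = 0 := (hI.dotProduct_mulVec_zero_iff _).mp hq
    -- V₁ x ∈ range I
    have hmem : V₁ *ᵥ x ∈ LinearMap.range I.mulVecLin := by
      rw [← hrange]; exact ⟨x, rfl⟩
    obtain ⟨w, hw⟩ := hmem
    have hIt : Iᵀ = I := by
      have h' : Iᴴ = Iᵀ := by ext i j; simp [conjTranspose_apply]
      rw [← h']; exact hI.1
    rw [Matrix.mulVecLin_apply] at hw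
    have hv0 : V₁ *ᵥ x = 0 := by
      have hdp : (V₁ *ᵥ x) ⬝ᵥ (V₁ *ᵥ x) = 0 := by
        calc (V₁ *ᵥ x) ⬝ᵥ (V₁ *ᵥ x) = (I *ᵥ w) ⬝ᵥ (V₁ *ᵥ x) := by
              rw [hw]
          _ = w ⬝ᵥ (Iᵀ *ᵥ (V₁ *ᵥ x)) := by
              rw [dotProduct_comm, dotProduct_mulVec, ← Matrix.mulVec_transpose,
                dotProduct_comm]
          _ = 0 := by rw [hIt, hIv, dotProduct_zero]
      exact dotProduct_self_eq_zero.mp hdp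
    apply hx
    have : (V₁ᵀ * V₁) *ᵥ x = 0 := by
      rw [← Matrix.mulVec_mulVec, hv0, Matrix.mulVec_zero]
    rwa [hV, Matrix.one_mulVec] at this
  refine ⟨hApos, ?_⟩
  -- Schur complement argument
  haveI : Invertible S := hS.isUnit.invertible
  haveI : Invertible (V₁ᵀ * I * V₁) := hApos.isUnit.invertible
  have hGVt : (G * V₁)ᴴ = V₁ᵀ * Gᵀ := by
    rw [conjTranspose_mul, hVt]
    congr 1
  have h1 : ((V₁ᵀ * I * V₁) - (G * V₁)ᴴ * S⁻¹ * (G * V₁)).PosSemidef := by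
    have h2 := hIJ.conjTranspose_mul_mul_same V₁
    rw [hVt] at h2
    have : V₁ᵀ * (I - Gᵀ * S⁻¹ * G) * V₁
        = (V₁ᵀ * I * V₁) - (G * V₁)ᴴ * S⁻¹ * (G * V₁) := by
      rw [hGVt]
      simp only [Matrix.mul_sub, Matrix.sub_mul, Matrix.mul_assoc]
    rwa [this] at h2
  have hblock : (fromBlocks S (G * V₁) (G * V₁)ᴴ (V₁ᵀ * I * V₁)).PosSemidef :=
    (PosDef.fromBlocks₁₁ _ _ hS).mpr h1
  have h3 := (PosDef.fromBlocks₂₂ _ _ hApos).mp hblock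
  have : S - G * V₁ * (V₁ᵀ * I * V₁)⁻¹ * V₁ᵀ * Gᵀ
      = S - G * V₁ * (V₁ᵀ * I * V₁)⁻¹ * (G * V₁)ᴴ := by
    rw [hGVt, Matrix.mul_assoc, Matrix.mul_assoc, Matrix.mul_assoc]
  rw [this]
  exact h3
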